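/- Let ε ∈ (0,1), a > 0, b > 0 with Q(a,b) = 1 − ε, and let y : ℝ → ℝ be a function differentiable at a with y(a) = b, y > 0 on a neighborhood of a, and Q(x, y(x)) = 1 − ε for all x in a neighborhood of a (i.e. y parametrizes the level curve of the Marcum Q-function through (a,b)). Then y'(a) = I_1(a·b)/I_0(a·b). -/

import Mathlib

open Real MeasureTheory Filter

noncomputable def besselI0 (z : ℝ) : ℝ :=
  ∑' k : ℕ, (z / 2) ^ (2 * k) / ((Nat.factorial k : ℝ)) ^ 2

noncomputable def besselI1 (z : ℝ) : ℝ :=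
  ∑' k : ℕ, (z / 2) ^ (2 * k + 1) / ((Nat.factorial k : ℝ) * (Nat.factorial (k + 1) : ℝ))

noncomputable def marcumQ (a b : ℝ) : ℝ :=
  ∫ t in Set.Ioi b, t * Real.exp (-(t ^ 2 + a ^ 2) / 2) * besselI0 (a * t)

noncomputable def gaussQ (c : ℝ) : ℝ :=
  ∫ t in Set.Ioi c, (1 / Real.sqrt (2 * Real.pi)) * Real.exp (-t ^ 2 / 2)

lemma fact_bound0 (k : ℕ) : (2 * k).factorial ≤ 4 ^ k * k.factorial ^ 2 := by
  induction k with
  | zero => simp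
  | succ n ih =>
    have h1 : 2 * (n + 1) = (2 * n + 1) + 1 := by ring
    rw [h1, Nat.factorial_succ, Nat.factorial_succ]
    calc (2 * n + 1 + 1) * ((2 * n + 1) * (2 * n).factorial)
        ≤ (2 * n + 2) * ((2 * n + 2) * (4 ^ n * n.factorial ^ 2)) := by
          apply Nat.mul_le_mul (by omega)
          exact Nat.mul_le_mul (by omega) ih
      _ = 4 ^ (n + 1) * ((n+1) * n.factorial) ^ 2 := by ring
      _ ≤ _ := by rw [Nat.factorial_succ]

lemma fact_bound1 (k : ℕ) : (2 * k + 1).factorial ≤ 2 * 4 ^ k * (k.factorial * (k+1).factorial) := by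
  induction k with
  | zero => simp
  | succ n ih =>
    have h1 : 2 * (n + 1) + 1 = (2 * n + 2) + 1 := by ring
    rw [h1, Nat.factorial_succ, Nat.factorial_succ]
    calc (2*n+2+1) * ((2*n+1+1) * (2*n+1).factorial)
        ≤ (2*n+4) * ((2*n+2) * (2 * 4^n * (n.factorial * (n+1).factorial))) := by
          apply Nat.mul_le_mul (by omega)
          exact Nat.mul_le_mul (by omega) ih
      _ = 2 * 4 ^ (n+1) * (((n+1) * n.factorial) * ((n+2) * (n+1).factorial)) := by ring
      _ = _ := by
          simp [Nat.factorial_succ]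

lemma abs_term0_le (z : ℝ) (k : ℕ) :
    |(z / 2) ^ (2 * k) / ((Nat.factorial k : ℝ)) ^ 2| ≤ |z| ^ (2 * k) / (2 * k).factorial := by
  rw [abs_div, abs_pow, abs_div]
  have h2 : |(2:ℝ)| = 2 := by norm_num
  rw [h2, div_pow, abs_of_nonneg (by positivity : (0:ℝ) ≤ ((Nat.factorial k : ℝ))^2)]
  rw [div_div]
  have hpow : (2:ℝ) ^ (2 * k) = 4 ^ k := by
    rw [pow_mul]; norm_num
  rw [hpow]
  apply div_le_div_of_nonneg_left (by positivity) (by positivity)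
  calc ((2 * k).factorial : ℝ) ≤ ((4 ^ k * k.factorial ^ 2 : ℕ) : ℝ) := by
        exact_mod_cast fact_bound0 k
    _ = 4 ^ k * (k.factorial : ℝ) ^ 2 := by push_cast; ring

lemma abs_term1_le (z : ℝ) (k : ℕ) :
    |(z / 2) ^ (2 * k + 1) / ((Nat.factorial k : ℝ) * (Nat.factorial (k+1) : ℝ))| ≤
      |z| ^ (2 * k + 1) / (2 * k + 1).factorial := by
  rw [abs_div, abs_pow, abs_div]
  have h2 : |(2:ℝ)| = 2 := by norm_num
  rw [h2, div_pow, abs_of_nonneg (by positivity : (0:ℝ) ≤ (Nat.factorial k : ℝ) * (Nat.factorial (k+1):ℝ))]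
  rw [div_div]
  apply div_le_div_of_nonneg_left (by positivity) (by positivity)
  calc ((2 * k + 1).factorial : ℝ) ≤ ((2 * 4 ^ k * (k.factorial * (k+1).factorial) : ℕ) : ℝ) := by
        exact_mod_cast fact_bound1 k
    _ = 2 ^ (2*k+1) * ((k.factorial : ℝ) * ((k+1).factorial : ℝ)) := by
        have h4 : (2:ℝ) ^ (2*k+1) = 2 * 4 ^ k := by
          rw [pow_succ, pow_mul]; norm_num; ring
        rw [h4]; push_cast; ring

lemma summable_even (z : ℝ) : Summable (fun k : ℕ => |z| ^ (2 * k) / (2 * k).factorial) :=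
  (Real.summable_pow_div_factorial |z|).comp_injective (fun a b h => by omega)

lemma summable_odd (z : ℝ) : Summable (fun k : ℕ => |z| ^ (2 * k + 1) / (2 * k + 1).factorial) :=
  (Real.summable_pow_div_factorial |z|).comp_injective (fun a b h => by omega)

lemma summable_besselI0 (z : ℝ) :
    Summable (fun k : ℕ => (z / 2) ^ (2 * k) / ((Nat.factorial k : ℝ)) ^ 2) := by
  apply Summable.of_norm_bounded (summable_even z)
  intro k
  rw [Real.norm_eq_abs]; exact abs_term0_le z k

lemma summable_besselI1 (z : ℝ) :
    Summable (fun k : ℕ => (z / 2) ^ (2 * k + 1) / ((Nat.factorial k : ℝ) * (Nat.factorial (k+1) : ℝ))) := by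
  apply Summable.of_norm_bounded (summable_odd z)
  intro k
  rw [Real.norm_eq_abs]; exact abs_term1_le z k

lemma summable_norm_besselI0 (z : ℝ) :
    Summable (fun k : ℕ => ‖(z / 2) ^ (2 * k) / ((Nat.factorial k : ℝ)) ^ 2‖) := by
  apply Summable.of_nonneg_of_le (fun k => norm_nonneg _) _ (summable_even z)
  intro k
  rw [Real.norm_eq_abs]; exact abs_term0_le z k

lemma summable_norm_besselI1 (z : ℝ) :
    Summable (fun k : ℕ => ‖(z / 2) ^ (2 * k + 1) / ((Nat.factorial k : ℝ) * (Nat.factorial (k+1) : ℝ))‖) := by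
  apply Summable.of_nonneg_of_le (fun k => norm_nonneg _) _ (summable_odd z)
  intro k
  rw [Real.norm_eq_abs]; exact abs_term1_le z k

lemma exp_abs_eq (z : ℝ) : Real.exp |z| = ∑' n : ℕ, |z| ^ n / n.factorial := by
  rw [Real.exp_eq_exp_ℝ, NormedSpace.exp_eq_tsum_div]

lemma abs_besselI0_le (z : ℝ) : |besselI0 z| ≤ Real.exp |z| := by
  have h1 : |besselI0 z| ≤ ∑' k : ℕ, |z| ^ (2 * k) / (2 * k).factorial := by
    rw [besselI0, ← Real.norm_eq_abs]
    calc ‖∑' k : ℕ, (z / 2) ^ (2 * k) / ((Nat.factorial k : ℝ)) ^ 2‖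
        ≤ ∑' k : ℕ, ‖(z / 2) ^ (2 * k) / ((Nat.factorial k : ℝ)) ^ 2‖ :=
          norm_tsum_le_tsum_norm (summable_norm_besselI0 z)
      _ ≤ _ := by
          apply Summable.tsum_le_tsum _ (summable_norm_besselI0 z) (summable_even z)
          intro k; rw [Real.norm_eq_abs]; exact abs_term0_le z k
  refine h1.trans ?_
  rw [exp_abs_eq]
  exact Summable.tsum_le_tsum_of_inj (fun k => 2 * k) (fun a b h => by dsimp at h; omega)
    (fun c _ => by positivity) (fun k => le_rfl) (summable_even z)
    (Real.summable_pow_div_factorial |z|)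

lemma abs_besselI1_le (z : ℝ) : |besselI1 z| ≤ Real.exp |z| := by
  have h1 : |besselI1 z| ≤ ∑' k : ℕ, |z| ^ (2 * k + 1) / (2 * k + 1).factorial := by
    rw [besselI1, ← Real.norm_eq_abs]
    calc ‖∑' k : ℕ, (z / 2) ^ (2 * k + 1) / ((Nat.factorial k : ℝ) * (Nat.factorial (k+1) : ℝ))‖
        ≤ ∑' k : ℕ, ‖(z / 2) ^ (2 * k + 1) / ((Nat.factorial k : ℝ) * (Nat.factorial (k+1) : ℝ))‖ :=
          norm_tsum_le_tsum_norm (summable_norm_besselI1 z)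
      _ ≤ _ := by
          apply Summable.tsum_le_tsum _ (summable_norm_besselI1 z) (summable_odd z)
          intro k; rw [Real.norm_eq_abs]; exact abs_term1_le z k
  refine h1.trans ?_
  rw [exp_abs_eq]
  exact Summable.tsum_le_tsum_of_inj (fun k => 2 * k + 1) (fun a b h => by dsimp at h; omega)
    (fun c _ => by positivity) (fun k => le_rfl) (summable_odd z)
    (Real.summable_pow_div_factorial |z|)

lemma one_le_besselI0 (z : ℝ) : 1 ≤ besselI0 z := by
  have h0 : (z / 2) ^ (2 * 0) / ((Nat.factorial 0 : ℝ)) ^ 2 = 1 := by norm_num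
  calc (1:ℝ) = (z / 2) ^ (2 * 0) / ((Nat.factorial 0 : ℝ)) ^ 2 := h0.symm
    _ ≤ besselI0 z := by
        apply Summable.le_tsum (summable_besselI0 z) 0
        intro k _
        rw [pow_mul]
        positivity

lemma besselI0_pos (z : ℝ) : 0 < besselI0 z := lt_of_lt_of_le one_pos (one_le_besselI0 z)
lemma nat_le_two_pow (k : ℕ) : (k:ℝ) ≤ 2 ^ k := by
  exact_mod_cast (Nat.lt_two_pow_self (n := k)).le

lemma nat_odd_le_three_pow (k : ℕ) : (2 * k + 1 : ℝ) ≤ 3 ^ k := by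
  induction k with
  | zero => norm_num
  | succ n ih =>
    have : (3:ℝ)^(n+1) = 3 * 3^n := by ring
    rw [this]
    push_cast at ih ⊢
    nlinarith [pow_nonneg (by norm_num : (0:ℝ) ≤ 3) n]

lemma summable_k_mul (c : ℝ) (hc : 0 ≤ c) :
    Summable (fun k : ℕ => (k:ℝ) * c ^ k / k.factorial) := by
  apply Summable.of_nonneg_of_le (fun k => by positivity) _
    (Real.summable_pow_div_factorial (2 * c))
  intro k
  rw [mul_pow]
  apply div_le_div_of_nonneg_right _ (by positivity)
  exact mul_le_mul_of_nonneg_right (nat_le_two_pow k) (by positivity)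

lemma summable_odd_mul (c : ℝ) (hc : 0 ≤ c) :
    Summable (fun k : ℕ => (2 * k + 1 : ℝ) * c ^ k / k.factorial) := by
  apply Summable.of_nonneg_of_le (fun k => by positivity) _
    (Real.summable_pow_div_factorial (3 * c))
  intro k
  rw [mul_pow]
  apply div_le_div_of_nonneg_right _ (by positivity)
  exact mul_le_mul_of_nonneg_right (nat_odd_le_three_pow k) (by positivity)

lemma hasDerivAt_besselI0 (z : ℝ) : HasDerivAt besselI0 (besselI1 z) z := by
  set R : ℝ := |z| + 1 with hR
  have hR1 : 1 ≤ R := by have := abs_nonneg z; simp only [hR]; linarith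
  have hR0 : 0 < R := by positivity
  have hzR : z ∈ Metric.ball (0:ℝ) R := by
    simp [Metric.mem_ball, Real.dist_eq, hR]
  have h0R : (0:ℝ) ∈ Metric.ball (0:ℝ) R := by
    simp [Metric.mem_ball, hR0]
  set g' : ℕ → ℝ → ℝ := fun k x => (↑(2*k) * (x/2)^(2*k-1) * (1/2)) / ((k.factorial:ℝ))^2 with hg'def
  have hg : ∀ (k : ℕ) (x : ℝ), HasDerivAt (fun w => (w/2)^(2*k) / ((k.factorial:ℝ))^2) (g' k x) x :=
    fun k x => (((hasDerivAt_id x).div_const 2).pow _).div_const _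
  set u : ℕ → ℝ := fun k => (k : ℝ) * (R^2)^k / k.factorial with hu_def
  have hu : Summable u := summable_k_mul _ (by positivity)
  have hbound : ∀ (k : ℕ) (x : ℝ), x ∈ Metric.ball (0:ℝ) R → ‖g' k x‖ ≤ u k := by
    intro k x hx
    have hx2 : |x/2| ≤ R := by
      rw [Metric.mem_ball, Real.dist_eq, sub_zero] at hx
      rw [abs_div]
      calc |x| / |2| = |x| / 2 := by norm_num
        _ ≤ R / 1 := by
            apply div_le_div₀ (le_of_lt hR0) hx.le one_pos (by norm_num)
        _ = R := by ring
    have e1 : ‖g' k x‖ = (k:ℝ) * |x/2|^(2*k-1) / ((k.factorial:ℝ))^2 := by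
      rw [hg'def]
      rw [Real.norm_eq_abs, abs_div, abs_of_nonneg (by positivity : (0:ℝ) ≤ ((k.factorial:ℝ))^2),
        abs_mul, abs_mul, abs_pow, Nat.abs_cast]
      push_cast
      rw [abs_of_nonneg (by norm_num : (0:ℝ) ≤ (1/2:ℝ))]
      ring
    rw [e1, hu_def]
    have h2 : |x/2|^(2*k-1) ≤ R^(2*k) := by
      calc |x/2|^(2*k-1) ≤ R^(2*k-1) := pow_le_pow_left₀ (abs_nonneg _) hx2 _
        _ ≤ R^(2*k) := pow_le_pow_right₀ hR1 (Nat.sub_le _ _)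
    calc (k:ℝ) * |x/2|^(2*k-1) / ((k.factorial:ℝ))^2
        ≤ (k:ℝ) * R^(2*k) / ((k.factorial:ℝ))^2 := by
          apply div_le_div_of_nonneg_right _ (by positivity)
          exact mul_le_mul_of_nonneg_left h2 (Nat.cast_nonneg k)
      _ ≤ (k:ℝ) * (R^2)^k / (k.factorial:ℝ) := by
          rw [← pow_mul]
          apply div_le_div_of_nonneg_left (by positivity) (by positivity)
          calc (k.factorial : ℝ) = (k.factorial:ℝ) * 1 := by ring
            _ ≤ (k.factorial:ℝ) * (k.factorial:ℝ) := by
                apply mul_le_mul_of_nonneg_left _ (by positivity)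
                exact_mod_cast Nat.one_le_iff_ne_zero.mpr k.factorial_ne_zero
            _ = ((k.factorial:ℝ))^2 := by ring
  have key := hasDerivAt_tsum_of_isPreconnected hu (Metric.isOpen_ball)
    ((convex_ball (0:ℝ) R).isPreconnected) (fun k y _ => hg k y) hbound h0R
    (summable_besselI0 0) hzR
  have hsum' : Summable (fun k => g' k z) :=
    Summable.of_norm_bounded hu (fun k => hbound k z hzR)
  have heq : ∑' k, g' k z = besselI1 z := by
    rw [Summable.tsum_eq_zero_add hsum']
    have h00 : g' 0 z = 0 := by simp [hg'def]
    rw [h00, zero_add, besselI1]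
    apply tsum_congr
    intro k
    have hexp : 2*(k+1)-1 = 2*k+1 := by omega
    rw [hg'def]
    simp only [hexp]
    rw [Nat.factorial_succ]
    have hkf : ((k.factorial:ℝ)) ≠ 0 := by positivity
    have hk1 : ((k:ℝ)+1) ≠ 0 := by positivity
    push_cast
    field_simp
  rw [← heq]
  exact key
lemma differentiableAt_besselI1 (z : ℝ) : DifferentiableAt ℝ besselI1 z := by
  set R : ℝ := |z| + 1 with hR
  have hR1 : 1 ≤ R := by have := abs_nonneg z; simp only [hR]; linarith
  have hR0 : 0 < R := by positivity
  have hzR : z ∈ Metric.ball (0:ℝ) R := by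
    simp [Metric.mem_ball, Real.dist_eq, hR]
  have h0R : (0:ℝ) ∈ Metric.ball (0:ℝ) R := by
    simp [Metric.mem_ball, hR0]
  set g' : ℕ → ℝ → ℝ :=
    fun k x => (↑(2*k+1) * (x/2)^(2*k) * (1/2)) / ((k.factorial:ℝ) * ((k+1).factorial:ℝ)) with hg'def
  have hg : ∀ (k : ℕ) (x : ℝ), HasDerivAt
      (fun w => (w/2)^(2*k+1) / ((k.factorial:ℝ) * ((k+1).factorial:ℝ))) (g' k x) x :=
    fun k x => (((hasDerivAt_id x).div_const 2).pow _).div_const _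
  set u : ℕ → ℝ := fun k => (2*k+1 : ℝ) * (R^2)^k / k.factorial with hu_def
  have hu : Summable u := summable_odd_mul _ (by positivity)
  have hbound : ∀ (k : ℕ) (x : ℝ), x ∈ Metric.ball (0:ℝ) R → ‖g' k x‖ ≤ u k := by
    intro k x hx
    have hx2 : |x/2| ≤ R := by
      rw [Metric.mem_ball, Real.dist_eq, sub_zero] at hx
      rw [abs_div]
      calc |x| / |2| = |x| / 2 := by norm_num
        _ ≤ R / 1 := by
            apply div_le_div₀ (le_of_lt hR0) hx.le one_pos (by norm_num)
        _ = R := by ring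
    have e1 : ‖g' k x‖ = (2*k+1:ℝ) * |x/2|^(2*k) * (1/2) / ((k.factorial:ℝ) * ((k+1).factorial:ℝ)) := by
      rw [hg'def]
      rw [Real.norm_eq_abs, abs_div,
        abs_of_nonneg (by positivity : (0:ℝ) ≤ (k.factorial:ℝ) * ((k+1).factorial:ℝ)),
        abs_mul, abs_mul, abs_pow, Nat.abs_cast]
      push_cast
      rw [abs_of_nonneg (by norm_num : (0:ℝ) ≤ (1/2:ℝ))]
    rw [e1, hu_def]
    have h2 : |x/2|^(2*k) ≤ (R^2)^k := by
      rw [← pow_mul]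
      exact pow_le_pow_left₀ (abs_nonneg _) hx2 _
    calc (2*k+1:ℝ) * |x/2|^(2*k) * (1/2) / ((k.factorial:ℝ) * ((k+1).factorial:ℝ))
        ≤ (2*k+1:ℝ) * (R^2)^k * 1 / ((k.factorial:ℝ) * 1) := by
          apply div_le_div₀ (by positivity) _ (by positivity) _
          · apply mul_le_mul _ (by norm_num) (by norm_num) (by positivity)
            exact mul_le_mul_of_nonneg_left h2 (by positivity)
          · apply mul_le_mul_of_nonneg_left _ (by positivity)
            exact_mod_cast Nat.one_le_iff_ne_zero.mpr (k+1).factorial_ne_zero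
      _ = (2*k+1:ℝ) * (R^2)^k / (k.factorial:ℝ) := by ring
  have key := hasDerivAt_tsum_of_isPreconnected hu (Metric.isOpen_ball)
    ((convex_ball (0:ℝ) R).isPreconnected) (fun k y _ => hg k y) hbound h0R
    (summable_besselI1 0) hzR
  exact ⟨_, key.hasFDerivAt⟩

lemma continuous_besselI1 : Continuous besselI1 := by
  rw [continuous_iff_continuousAt]
  exact fun z => (differentiableAt_besselI1 z).continuousAt

lemma continuous_besselI0 : Continuous besselI0 := by
  rw [continuous_iff_continuousAt]
  exact fun z => (hasDerivAt_besselI0 z).differentiableAt.continuousAt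

lemma hasDerivAt_id_mul_besselI1 (z : ℝ) :
    HasDerivAt (fun w => w * besselI1 w) (z * besselI0 z) z := by
  set R : ℝ := |z| + 1 with hR
  have hR1 : 1 ≤ R := by have := abs_nonneg z; simp only [hR]; linarith
  have hR0 : 0 < R := by positivity
  have hzR : z ∈ Metric.ball (0:ℝ) R := by
    simp [Metric.mem_ball, Real.dist_eq, hR]
  have h0R : (0:ℝ) ∈ Metric.ball (0:ℝ) R := by
    simp [Metric.mem_ball, hR0]
  set g : ℕ → ℝ → ℝ :=
    fun k x => (x/2)^(2*k+2) * (2 / ((k.factorial:ℝ) * ((k+1).factorial:ℝ))) with hgdef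
  set g' : ℕ → ℝ → ℝ :=
    fun k x => (↑(2*k+2) * (x/2)^(2*k+1) * (1/2)) * (2 / ((k.factorial:ℝ) * ((k+1).factorial:ℝ))) with hg'def
  have hg : ∀ (k : ℕ) (x : ℝ), HasDerivAt (g k) (g' k x) x :=
    fun k x => (((hasDerivAt_id x).div_const 2).pow _).mul_const _
  have hgsum : ∀ x : ℝ, ∑' k, g k x = x * besselI1 x := by
    intro x
    rw [besselI1, ← tsum_mul_left]
    apply tsum_congr
    intro k
    simp only [hgdef]
    have : (x/2)^(2*k+2) = (x/2)^(2*k+1) * (x/2) := by rw [pow_succ]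
    rw [this]
    field_simp
  set u : ℕ → ℝ := fun k => (2*k+2 : ℝ) * (R^2)^(k+1) / k.factorial with hu_def
  have hu : Summable u := by
    have h1 : Summable (fun k : ℕ => (2*R^2) * ((2 * (R^2))^k / k.factorial)) :=
      (Real.summable_pow_div_factorial (2*R^2)).mul_left _
    apply Summable.of_nonneg_of_le (fun k => by positivity) _ h1
    intro k
    have hk2 : (2*k+2:ℝ) ≤ 2 * 2^k := by
      have h := Nat.lt_two_pow_self (n := k)
      have h' : ((k+1:ℕ):ℝ) ≤ ((2^k:ℕ):ℝ) := by exact_mod_cast h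
      push_cast at h'
      linarith
    rw [pow_succ]
    calc (2*k+2 : ℝ) * ((R^2)^k * R^2) / k.factorial
        ≤ (2 * 2^k) * ((R^2)^k * R^2) / k.factorial := by gcongr
      _ = (2*R^2) * ((2 * (R^2))^k / k.factorial) := by
          rw [mul_pow]; ring
  have hbound : ∀ (k : ℕ) (x : ℝ), x ∈ Metric.ball (0:ℝ) R → ‖g' k x‖ ≤ u k := by
    intro k x hx
    have hx2 : |x/2| ≤ R := by
      rw [Metric.mem_ball, Real.dist_eq, sub_zero] at hx
      rw [abs_div]
      calc |x| / |2| = |x| / 2 := by norm_num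
        _ ≤ R / 1 := by
            apply div_le_div₀ (le_of_lt hR0) hx.le one_pos (by norm_num)
        _ = R := by ring
    have e1 : ‖g' k x‖ = (2*k+2:ℝ) * |x/2|^(2*k+1) / ((k.factorial:ℝ) * ((k+1).factorial:ℝ)) := by
      rw [hg'def]
      rw [Real.norm_eq_abs, abs_mul, abs_mul, abs_mul, abs_pow, Nat.abs_cast,
        abs_of_nonneg (by positivity : (0:ℝ) ≤ 2 / ((k.factorial:ℝ) * ((k+1).factorial:ℝ)))]
      push_cast
      rw [abs_of_nonneg (by norm_num : (0:ℝ) ≤ (1/2:ℝ))]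
      field_simp
    rw [e1, hu_def]
    have h2 : |x/2|^(2*k+1) ≤ (R^2)^(k+1) := by
      calc |x/2|^(2*k+1) ≤ R^(2*k+1) := pow_le_pow_left₀ (abs_nonneg _) hx2 _
        _ ≤ R^(2*k+2) := pow_le_pow_right₀ hR1 (by omega)
        _ = (R^2)^(k+1) := by rw [← pow_mul]; ring_nf
    calc (2*k+2:ℝ) * |x/2|^(2*k+1) / ((k.factorial:ℝ) * ((k+1).factorial:ℝ))
        ≤ (2*k+2:ℝ) * (R^2)^(k+1) / ((k.factorial:ℝ) * 1) := by
          apply div_le_div₀ (by positivity)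
            (mul_le_mul_of_nonneg_left h2 (by positivity)) (by positivity)
          apply mul_le_mul_of_nonneg_left _ (by positivity)
          exact_mod_cast Nat.one_le_iff_ne_zero.mpr (k+1).factorial_ne_zero
      _ = (2*k+2:ℝ) * (R^2)^(k+1) / (k.factorial:ℝ) := by ring
  have hg0 : Summable (fun k => g k 0) := by
    have : (fun k : ℕ => g k 0) = (fun k : ℕ => (0:ℝ)) := by
      funext k
      rw [hgdef]
      simp
    rw [this]
    exact summable_zero
  have key := hasDerivAt_tsum_of_isPreconnected hu (Metric.isOpen_ball)
    ((convex_ball (0:ℝ) R).isPreconnected) (fun k y _ => hg k y) hbound h0R hg0 hzR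
  have hsum' : Summable (fun k => g' k z) :=
    Summable.of_norm_bounded hu (fun k => hbound k z hzR)
  have heq : ∑' k, g' k z = z * besselI0 z := by
    rw [besselI0, ← tsum_mul_left]
    apply tsum_congr
    intro k
    simp only [hg'def]
    rw [Nat.factorial_succ]
    have hkf : ((k.factorial:ℝ)) ≠ 0 := by positivity
    push_cast
    field_simp
    ring
  have key2 : HasDerivAt (fun w => ∑' k, g k w) (z * besselI0 z) z := heq ▸ key
  apply key2.congr_of_eventuallyEq
  filter_upwards with x
  exact (hgsum x).symm
lemma integrable_master (n : ℕ) (c : ℝ) (hc : 0 ≤ c) :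
    Integrable (fun t : ℝ => |t|^n * Real.exp (c * |t| - t^2/2)) := by
  have hg : Integrable (fun t : ℝ => Real.exp (((n:ℝ)+c)^2) * Real.exp (-(1/4 : ℝ) * t^2)) :=
    (integrable_exp_neg_mul_sq (by norm_num)).const_mul _
  apply hg.mono'
  · apply Continuous.aestronglyMeasurable
    apply (continuous_abs.pow n).mul
    apply Real.continuous_exp.comp
    exact ((continuous_const.mul continuous_abs).sub ((continuous_pow 2).div_const 2))
  · filter_upwards with t
    rw [Real.norm_eq_abs, abs_of_nonneg (by positivity)]
    have h1 : |t|^n ≤ Real.exp ((n:ℝ) * |t|) := by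
      calc |t|^n ≤ (Real.exp |t|)^n := by
            apply pow_le_pow_left₀ (abs_nonneg _)
            linarith [Real.add_one_le_exp |t|]
        _ = Real.exp ((n:ℝ) * |t|) := by rw [← Real.exp_nat_mul]
    calc |t|^n * Real.exp (c * |t| - t^2/2)
        ≤ Real.exp ((n:ℝ) * |t|) * Real.exp (c * |t| - t^2/2) :=
          mul_le_mul_of_nonneg_right h1 (Real.exp_nonneg _)
      _ = Real.exp (((n:ℝ)+c) * |t| - t^2/2) := by rw [← Real.exp_add]; ring_nf
      _ ≤ Real.exp (((n:ℝ)+c)^2) * Real.exp (-(1/4:ℝ) * t^2) := by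
          rw [← Real.exp_add]
          apply Real.exp_le_exp.mpr
          nlinarith [sq_nonneg (|t| - 2*((n:ℝ)+c)), sq_abs t]

lemma tendsto_gauss_decay (c : ℝ) (hc : 0 ≤ c) :
    Tendsto (fun t : ℝ => t * Real.exp (c * t - t^2/2)) atTop (nhds 0) := by
  have h0 : Tendsto (fun t : ℝ => t^1 * Real.exp (-t)) atTop (nhds 0) :=
    Real.tendsto_pow_mul_exp_neg_atTop_nhds_zero 1
  apply squeeze_zero_norm' _ h0
  filter_upwards [eventually_ge_atTop (max 1 (2*c+2))] with t ht
  have ht1 : (1:ℝ) ≤ t := le_trans (le_max_left _ _) ht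
  have htc : 2*c+2 ≤ t := le_trans (le_max_right _ _) ht
  rw [Real.norm_eq_abs, abs_mul, abs_of_nonneg (by linarith : (0:ℝ) ≤ t),
    abs_of_nonneg (Real.exp_nonneg _), pow_one]
  apply mul_le_mul_of_nonneg_left _ (by linarith : (0:ℝ) ≤ t)
  apply Real.exp_le_exp.mpr
  nlinarith

lemma bound_F' (c : ℝ) (hc : 0 ≤ c) (x t : ℝ) (hx : |x| ≤ c) :
    ‖t * Real.exp (-(t^2 + x^2)/2) * (t * besselI1 (x*t) - x * besselI0 (x*t))‖ ≤
      |t|^2 * Real.exp (c*|t| - t^2/2) + c * (|t|^1 * Real.exp (c*|t| - t^2/2)) := by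
  have hE : Real.exp (-(t^2+x^2)/2) ≤ Real.exp (-(t^2)/2) := by
    apply Real.exp_le_exp.mpr
    nlinarith [sq_nonneg x]
  have hI1 : |besselI1 (x*t)| ≤ Real.exp (c*|t|) := by
    refine (abs_besselI1_le _).trans (Real.exp_le_exp.mpr ?_)
    rw [abs_mul]
    exact mul_le_mul_of_nonneg_right hx (abs_nonneg _)
  have hI0 : |besselI0 (x*t)| ≤ Real.exp (c*|t|) := by
    refine (abs_besselI0_le _).trans (Real.exp_le_exp.mpr ?_)
    rw [abs_mul]
    exact mul_le_mul_of_nonneg_right hx (abs_nonneg _)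
  have habs : |t * besselI1 (x*t) - x * besselI0 (x*t)| ≤
      |t| * Real.exp (c*|t|) + c * Real.exp (c*|t|) := by
    refine (abs_sub _ _).trans ?_
    apply add_le_add
    · rw [abs_mul]
      exact mul_le_mul_of_nonneg_left hI1 (abs_nonneg _)
    · rw [abs_mul]
      exact mul_le_mul (le_trans le_rfl hx) hI0 (abs_nonneg _) hc
  have hsplit : Real.exp (c*|t| - t^2/2) = Real.exp (c*|t|) * Real.exp (-(t^2)/2) := by
    rw [← Real.exp_add]; ring_nf
  calc ‖t * Real.exp (-(t^2 + x^2)/2) * (t * besselI1 (x*t) - x * besselI0 (x*t))‖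
      = |t| * Real.exp (-(t^2+x^2)/2) * |t * besselI1 (x*t) - x * besselI0 (x*t)| := by
        rw [Real.norm_eq_abs, abs_mul, abs_mul, abs_of_nonneg (Real.exp_nonneg _)]
    _ ≤ |t| * Real.exp (-(t^2)/2) * (|t| * Real.exp (c*|t|) + c * Real.exp (c*|t|)) := by
        apply mul_le_mul _ habs (abs_nonneg _) (by positivity)
        exact mul_le_mul_of_nonneg_left hE (abs_nonneg _)
    _ = |t|^2 * Real.exp (c*|t| - t^2/2) + c * (|t|^1 * Real.exp (c*|t| - t^2/2)) := by
        rw [hsplit]; ring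

lemma bound_f (c : ℝ) (hc : 0 ≤ c) (x t : ℝ) (hx : |x| ≤ c) :
    ‖t * Real.exp (-(t^2 + x^2)/2) * besselI0 (x*t)‖ ≤ |t|^1 * Real.exp (c*|t| - t^2/2) := by
  have hE : Real.exp (-(t^2+x^2)/2) ≤ Real.exp (-(t^2)/2) := by
    apply Real.exp_le_exp.mpr
    nlinarith [sq_nonneg x]
  have hI0 : |besselI0 (x*t)| ≤ Real.exp (c*|t|) := by
    refine (abs_besselI0_le _).trans (Real.exp_le_exp.mpr ?_)
    rw [abs_mul]
    exact mul_le_mul_of_nonneg_right hx (abs_nonneg _)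
  have hsplit : Real.exp (c*|t| - t^2/2) = Real.exp (c*|t|) * Real.exp (-(t^2)/2) := by
    rw [← Real.exp_add]; ring_nf
  calc ‖t * Real.exp (-(t^2 + x^2)/2) * besselI0 (x*t)‖
      = |t| * Real.exp (-(t^2+x^2)/2) * |besselI0 (x*t)| := by
        rw [Real.norm_eq_abs, abs_mul, abs_mul, abs_of_nonneg (Real.exp_nonneg _)]
    _ ≤ |t| * Real.exp (-(t^2)/2) * Real.exp (c*|t|) := by
        apply mul_le_mul _ hI0 (abs_nonneg _) (by positivity)
        exact mul_le_mul_of_nonneg_left hE (abs_nonneg _)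
    _ = |t|^1 * Real.exp (c*|t| - t^2/2) := by rw [hsplit]; ring

lemma continuous_f (x : ℝ) :
    Continuous (fun t : ℝ => t * Real.exp (-(t^2 + x^2)/2) * besselI0 (x*t)) := by
  apply Continuous.mul
  · apply continuous_id.mul
    apply Real.continuous_exp.comp
    exact (((continuous_pow 2).add continuous_const).neg.div_const 2)
  · exact continuous_besselI0.comp (continuous_const.mul continuous_id)

lemma continuous_F' (x : ℝ) :
    Continuous (fun t : ℝ => t * Real.exp (-(t^2 + x^2)/2) *
      (t * besselI1 (x*t) - x * besselI0 (x*t))) := by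
  apply Continuous.mul
  · apply continuous_id.mul
    apply Real.continuous_exp.comp
    exact (((continuous_pow 2).add continuous_const).neg.div_const 2)
  · apply Continuous.sub
    · exact continuous_id.mul (continuous_besselI1.comp (continuous_const.mul continuous_id))
    · exact continuous_const.mul (continuous_besselI0.comp (continuous_const.mul continuous_id))

lemma integrable_f (x : ℝ) :
    Integrable (fun t : ℝ => t * Real.exp (-(t^2 + x^2)/2) * besselI0 (x*t)) := by
  apply (integrable_master 1 |x| (abs_nonneg x)).mono'
    (continuous_f x).aestronglyMeasurable
  filter_upwards with t
  exact bound_f |x| (abs_nonneg x) x t le_rfl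

lemma integrable_F' (x : ℝ) (c : ℝ) (hc : 0 ≤ c) (hx : |x| ≤ c) :
    Integrable (fun t : ℝ => t * Real.exp (-(t^2 + x^2)/2) *
      (t * besselI1 (x*t) - x * besselI0 (x*t))) := by
  apply Integrable.mono' ((integrable_master 2 c hc).add ((integrable_master 1 c hc).const_mul c))
    (continuous_F' x).aestronglyMeasurable
  filter_upwards with t
  exact bound_F' c hc x t hx
lemma hasDerivAt_f_a (t x : ℝ) :
    HasDerivAt (fun w => t * Real.exp (-(t^2 + w^2)/2) * besselI0 (w*t))
      (t * Real.exp (-(t^2 + x^2)/2) * (t * besselI1 (x*t) - x * besselI0 (x*t))) x := by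
  have h2 : HasDerivAt (fun w : ℝ => Real.exp (-(t^2 + w^2)/2))
      (Real.exp (-(t^2 + x^2)/2) * (-(2*x^1)/2)) x := by
    apply HasDerivAt.exp
    exact (((hasDerivAt_pow 2 x).const_add (t^2)).neg).div_const 2
  have h3 : HasDerivAt (fun w : ℝ => besselI0 (w*t)) (besselI1 (x*t) * t) x := by
    have := (hasDerivAt_besselI0 (x*t)).comp x ((hasDerivAt_id x).mul_const t)
    simpa [Function.comp_def] using this
  have h4 : HasDerivAt (fun w => t * Real.exp (-(t^2 + w^2)/2) * besselI0 (w*t)) _ x :=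
    ((h2.const_mul t).mul h3)
  convert h4 using 1
  push_cast
  ring

lemma hasDerivAt_sI1_aux (a : ℝ) (ha : a ≠ 0) (t : ℝ) :
    HasDerivAt (fun s : ℝ => s * besselI1 (a*s)) (a * t * besselI0 (a*t)) t := by
  have hq : HasDerivAt (fun s : ℝ => (a*s) * besselI1 (a*s)) ((a*t) * besselI0 (a*t) * a) t := by
    have := (hasDerivAt_id_mul_besselI1 (a*t)).comp t ((hasDerivAt_id t).const_mul a)
    simpa [Function.comp_def] using this
  have hq2 : HasDerivAt (fun s : ℝ => (a*s) * besselI1 (a*s) / a) ((a*t) * besselI0 (a*t) * a / a) t :=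
    hq.div_const a
  have heq : (fun s : ℝ => (a*s) * besselI1 (a*s) / a) = (fun s : ℝ => s * besselI1 (a*s)) := by
    funext s
    field_simp
  rw [heq] at hq2
  convert hq2 using 1
  field_simp

lemma hasDerivAt_anti (a : ℝ) (ha : a ≠ 0) (t : ℝ) :
    HasDerivAt (fun s : ℝ => -(Real.exp (-(s^2 + a^2)/2) * (s * besselI1 (a*s))))
      (t * Real.exp (-(t^2 + a^2)/2) * (t * besselI1 (a*t) - a * besselI0 (a*t))) t := by
  have h2 : HasDerivAt (fun s : ℝ => Real.exp (-(s^2 + a^2)/2))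
      (Real.exp (-(t^2 + a^2)/2) * (-(2*t^1)/2)) t := by
    apply HasDerivAt.exp
    exact (((hasDerivAt_pow 2 t).add_const (a^2)).neg).div_const 2
  have h4 : HasDerivAt (fun s : ℝ => -(Real.exp (-(s^2 + a^2)/2) * (s * besselI1 (a*s)))) _ t :=
    (h2.mul (hasDerivAt_sI1_aux a ha t)).neg
  convert h4 using 1
  push_cast
  ring

lemma integral_Fa (a : ℝ) (ha : 0 < a) (s : ℝ) :
    ∫ t in Set.Ioi s, t * Real.exp (-(t^2 + a^2)/2) * (t * besselI1 (a*t) - a * besselI0 (a*t))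
      = s * Real.exp (-(s^2 + a^2)/2) * besselI1 (a*s) := by
  have hint : IntegrableOn (fun t : ℝ => t * Real.exp (-(t^2 + a^2)/2) *
      (t * besselI1 (a*t) - a * besselI0 (a*t))) (Set.Ioi s) :=
    (integrable_F' a |a| (abs_nonneg a) le_rfl).integrableOn
  have htend : Tendsto (fun t : ℝ => -(Real.exp (-(t^2 + a^2)/2) * (t * besselI1 (a*t))))
      atTop (nhds 0) := by
    apply squeeze_zero_norm' _ (tendsto_gauss_decay a ha.le)
    filter_upwards [eventually_ge_atTop (0:ℝ)] with t ht
    have hI1 : |besselI1 (a*t)| ≤ Real.exp (a*t) := by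
      refine (abs_besselI1_le _).trans (Real.exp_le_exp.mpr ?_)
      rw [abs_mul, abs_of_pos ha, abs_of_nonneg ht]
    have hE : Real.exp (-(t^2+a^2)/2) ≤ Real.exp (-(t^2)/2) := by
      apply Real.exp_le_exp.mpr
      nlinarith [sq_nonneg a]
    have hsplit : Real.exp (a*t - t^2/2) = Real.exp (a*t) * Real.exp (-(t^2)/2) := by
      rw [← Real.exp_add]; ring_nf
    calc ‖-(Real.exp (-(t^2 + a^2)/2) * (t * besselI1 (a*t)))‖
        = Real.exp (-(t^2+a^2)/2) * (t * |besselI1 (a*t)|) := by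
          rw [norm_neg, Real.norm_eq_abs, abs_mul, abs_of_nonneg (Real.exp_nonneg _),
            abs_mul, abs_of_nonneg ht]
      _ ≤ Real.exp (-(t^2)/2) * (t * Real.exp (a*t)) := by
          apply mul_le_mul hE _ (by positivity) (Real.exp_nonneg _)
          exact mul_le_mul_of_nonneg_left hI1 ht
      _ = t * Real.exp (a*t - t^2/2) := by rw [hsplit]; ring
  have key := integral_Ioi_of_hasDerivAt_of_tendsto'
    (fun x _ => hasDerivAt_anti a ha.ne' x) hint htend
  rw [key]
  ring

lemma hasDerivAt_marcumQ_fst (s u₀ : ℝ) (hu : 0 < u₀) :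
    HasDerivAt (fun x => marcumQ x s)
      (s * Real.exp (-(s^2 + u₀^2)/2) * besselI1 (u₀*s)) u₀ := by
  set c : ℝ := |u₀| + 1 with hc
  have hc0 : 0 ≤ c := by positivity
  have hb : ∀ᵐ t ∂(volume.restrict (Set.Ioi s)), ∀ x ∈ Metric.ball u₀ 1,
      ‖t * Real.exp (-(t^2 + x^2)/2) * (t * besselI1 (x*t) - x * besselI0 (x*t))‖ ≤
        |t|^2 * Real.exp (c*|t| - t^2/2) + c * (|t|^1 * Real.exp (c*|t| - t^2/2)) := by
    apply Eventually.of_forall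
    intro t x hx
    apply bound_F' c hc0 x t
    rw [Metric.mem_ball, Real.dist_eq] at hx
    calc |x| = |u₀ + (x - u₀)| := by ring_nf
      _ ≤ |u₀| + |x - u₀| := abs_add_le _ _
      _ ≤ |u₀| + 1 := by linarith
  have hdiff : ∀ᵐ t ∂(volume.restrict (Set.Ioi s)), ∀ x ∈ Metric.ball u₀ 1,
      HasDerivAt (fun w => t * Real.exp (-(t^2 + w^2)/2) * besselI0 (w*t))
        (t * Real.exp (-(t^2 + x^2)/2) * (t * besselI1 (x*t) - x * besselI0 (x*t))) x :=
    Eventually.of_forall fun t x _ => hasDerivAt_f_a t x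
  have key := hasDerivAt_integral_of_dominated_loc_of_deriv_le
    (μ := volume.restrict (Set.Ioi s)) (x₀ := u₀)
    (F := fun x t => t * Real.exp (-(t^2 + x^2)/2) * besselI0 (x*t))
    (F' := fun x t => t * Real.exp (-(t^2 + x^2)/2) *
      (t * besselI1 (x*t) - x * besselI0 (x*t)))
    (bound := fun t => |t|^2 * Real.exp (c*|t| - t^2/2) + c * (|t|^1 * Real.exp (c*|t| - t^2/2)))
    (Metric.ball_mem_nhds u₀ one_pos)
    (Eventually.of_forall fun x => (continuous_f x).aestronglyMeasurable.restrict)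
    (integrable_f u₀).integrableOn
    ((continuous_F' u₀).aestronglyMeasurable.restrict)
    hb
    (((integrable_master 2 c hc0).add ((integrable_master 1 c hc0).const_mul c)).integrableOn)
    hdiff
  have h2 : (∫ t in Set.Ioi s, t * Real.exp (-(t^2 + u₀^2)/2) *
      (t * besselI1 (u₀*t) - u₀ * besselI0 (u₀*t)))
      = s * Real.exp (-(s^2 + u₀^2)/2) * besselI1 (u₀*s) := integral_Fa u₀ hu s
  have key2 := key.2
  rw [h2] at key2
  have hmq : (fun x => marcumQ x s) =
      (fun x => ∫ t in Set.Ioi s, t * Real.exp (-(t^2 + x^2)/2) * besselI0 (x*t)) := by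
    funext x
    rw [marcumQ]
  rw [hmq]
  exact key2
lemma marcumQ_sub_intervalIntegral (a b s : ℝ) :
    marcumQ a s = marcumQ a b - ∫ t in b..s, t * Real.exp (-(t^2 + a^2)/2) * besselI0 (a*t) := by
  have hint := integrable_f a
  rcases le_total b s with h | h
  · rw [intervalIntegral.integral_of_le h]
    have hunion : Set.Ioc b s ∪ Set.Ioi s = Set.Ioi b := Set.Ioc_union_Ioi_eq_Ioi h
    have h2 : marcumQ a b = (∫ t in Set.Ioc b s, t * Real.exp (-(t^2 + a^2)/2) * besselI0 (a*t))
        + marcumQ a s := by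
      rw [marcumQ, marcumQ, ← hunion,
        setIntegral_union (Set.Ioc_disjoint_Ioi le_rfl) measurableSet_Ioi
          hint.integrableOn hint.integrableOn]
    rw [h2]; ring
  · rw [intervalIntegral.integral_of_ge h]
    have hunion : Set.Ioc s b ∪ Set.Ioi b = Set.Ioi s := Set.Ioc_union_Ioi_eq_Ioi h
    have h2 : marcumQ a s = (∫ t in Set.Ioc s b, t * Real.exp (-(t^2 + a^2)/2) * besselI0 (a*t))
        + marcumQ a b := by
      rw [marcumQ, marcumQ, ← hunion,
        setIntegral_union (Set.Ioc_disjoint_Ioi le_rfl) measurableSet_Ioi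
          hint.integrableOn hint.integrableOn]
    rw [h2]; ring

lemma hasDerivAt_marcumQ_snd (a b : ℝ) :
    HasDerivAt (fun s => marcumQ a s)
      (-(b * Real.exp (-(b^2 + a^2)/2) * besselI0 (a*b))) b := by
  have hFTC := intervalIntegral.integral_hasDerivAt_right
    (f := fun t => t * Real.exp (-(t^2 + a^2)/2) * besselI0 (a*t)) (a := b) (b := b)
    ((integrable_f a).intervalIntegrable)
    ((continuous_f a).stronglyMeasurableAtFilter _ _)
    (continuous_f a).continuousAt
  have h2 := hFTC.const_sub (marcumQ a b)
  apply h2.congr_of_eventuallyEq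
  filter_upwards with s
  exact marcumQ_sub_intervalIntegral a b s

lemma continuous_phi : Continuous (fun p : ℝ × ℝ =>
    p.2 * Real.exp (-(p.2^2 + p.1^2)/2) * besselI1 (p.1 * p.2)) := by
  apply Continuous.mul
  · apply continuous_snd.mul
    apply Real.continuous_exp.comp
    exact (((continuous_snd.pow 2).add (continuous_fst.pow 2)).neg.div_const 2)
  · exact continuous_besselI1.comp (continuous_fst.mul continuous_snd)
theorem level_curve_derivative (ε a b : ℝ) (hε : ε ∈ Set.Ioo (0:ℝ) 1) (ha : 0 < a)
    (hb : 0 < b) (hab : marcumQ a b = 1 - ε) (y : ℝ → ℝ) (y' : ℝ)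
    (hderiv : HasDerivAt y y' a) (hya : y a = b)
    (hpos : ∀ᶠ x in nhds a, 0 < y x)
    (hlevel : ∀ᶠ x in nhds a, marcumQ x (y x) = 1 - ε) :
    y' = besselI1 (a * b) / besselI0 (a * b) := by
  set D : ℝ := b * Real.exp (-(b^2 + a^2)/2) * besselI1 (a*b) with hD_def
  have hI0pos : 0 < besselI0 (a*b) := besselI0_pos (a*b)
  have hEpos : 0 < Real.exp (-(b^2 + a^2)/2) := Real.exp_pos _
  -- derivative of the difference term
  have hD : HasDerivAt (fun x => marcumQ x (y x) - marcumQ a (y x)) D a := by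
    rw [hasDerivAt_iff_isLittleO, Asymptotics.isLittleO_iff]
    intro c hc
    have hcont := continuous_phi.continuousAt (x := (a, b))
    rw [Metric.continuousAt_iff] at hcont
    obtain ⟨δ, hδ0, hδ⟩ := hcont c hc
    have hr0 : 0 < min δ (a/2) := lt_min hδ0 (by linarith)
    have ev1 : ∀ᶠ x in nhds a, |x - a| < min δ (a/2) := by
      filter_upwards [Metric.ball_mem_nhds a hr0] with x hx
      rw [Metric.mem_ball, Real.dist_eq] at hx
      exact hx
    have hyc : Tendsto y (nhds a) (nhds b) := by
      have := hderiv.continuousAt.tendsto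
      rwa [hya] at this
    have ev2 : ∀ᶠ x in nhds a, dist (y x) b < δ := by
      have := hyc.eventually_mem (Metric.ball_mem_nhds b hδ0)
      filter_upwards [this] with x hx
      rwa [Metric.mem_ball] at hx
    filter_upwards [ev1, ev2, hpos] with x h1 h2 h3
    have hax : a / 2 < x := by
      have : |x - a| < a/2 := lt_of_lt_of_le h1 (min_le_right _ _)
      rw [abs_lt] at this
      linarith [this.1]
    have hder : ∀ u ∈ Set.uIcc a x, HasDerivAt (fun w => marcumQ w (y x))
        (y x * Real.exp (-((y x)^2 + u^2)/2) * besselI1 (u * y x)) u := by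
      intro u hu
      apply hasDerivAt_marcumQ_fst
      have hmin : a ⊓ x ≤ u := hu.1
      have : a/2 < a ⊓ x := lt_min (by linarith) hax
      linarith
    have hφcont : Continuous (fun u : ℝ => y x * Real.exp (-((y x)^2 + u^2)/2) * besselI1 (u * y x)) :=
      continuous_phi.comp (continuous_id.prodMk continuous_const)
    have hii : IntervalIntegrable (fun u : ℝ => y x * Real.exp (-((y x)^2 + u^2)/2) * besselI1 (u * y x)) volume a x :=
      hφcont.intervalIntegrable a x
    have hFTC := intervalIntegral.integral_eq_sub_of_hasDerivAt hder hii
    have hsplit : marcumQ x (y x) - marcumQ a (y x) - (x - a) • D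
        = ∫ u in a..x, (y x * Real.exp (-((y x)^2 + u^2)/2) * besselI1 (u * y x) - D) := by
      rw [intervalIntegral.integral_sub hii (intervalIntegrable_const),
        intervalIntegral.integral_const, hFTC]
    have hzero : marcumQ a (y a) - marcumQ a (y a) = 0 := sub_self _
    rw [hya] at hzero ⊢
    rw [show marcumQ a b - marcumQ a b = (0:ℝ) from sub_self _, sub_zero, hsplit]
    have hbound : ∀ u ∈ Set.uIoc a x,
        ‖y x * Real.exp (-((y x)^2 + u^2)/2) * besselI1 (u * y x) - D‖ ≤ c := by
      intro u hu
      have hmin : min a x < u := hu.1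
      have hmax : u ≤ max a x := hu.2
      have hua : |u - a| ≤ |x - a| := by
        rcases le_total a x with hax' | hax'
        · rw [min_eq_left hax'] at hmin
          rw [max_eq_right hax'] at hmax
          rw [abs_of_nonneg (by linarith : (0:ℝ) ≤ u - a),
            abs_of_nonneg (by linarith : (0:ℝ) ≤ x - a)]
          linarith
        · rw [min_eq_right hax'] at hmin
          rw [max_eq_left hax'] at hmax
          rw [abs_of_nonpos (by linarith : u - a ≤ 0),
            abs_of_nonpos (by linarith : x - a ≤ 0)]
          linarith
      have hdist : dist (u, y x) (a, b) < δ := by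
        rw [Prod.dist_eq]
        apply max_lt
        · rw [Real.dist_eq]
          exact lt_of_le_of_lt hua (lt_of_lt_of_le h1 (min_le_left _ _))
        · exact h2
      have := hδ hdist
      rw [Real.dist_eq] at this
      exact le_of_lt this
    calc ‖∫ u in a..x, (y x * Real.exp (-((y x)^2 + u^2)/2) * besselI1 (u * y x) - D)‖
        ≤ c * |x - a| := intervalIntegral.norm_integral_le_of_norm_le_const hbound
      _ = c * ‖x - a‖ := by rw [Real.norm_eq_abs]
  -- derivative of the second term
  have hB : HasDerivAt (fun s => marcumQ a s) (-(b * Real.exp (-(b^2 + a^2)/2) * besselI0 (a*b))) (y a) := by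
    rw [hya]
    exact hasDerivAt_marcumQ_snd a b
  have hχ : HasDerivAt (fun x => marcumQ a (y x))
      (-(b * Real.exp (-(b^2 + a^2)/2) * besselI0 (a*b)) * y') a := hB.comp a hderiv
  have hsum : HasDerivAt (fun x => (marcumQ x (y x) - marcumQ a (y x)) + marcumQ a (y x)) _ a := hD.add hχ
  have hfun : (fun x => (marcumQ x (y x) - marcumQ a (y x)) + marcumQ a (y x))
      = fun x => marcumQ x (y x) := by
    funext x
    ring
  rw [hfun] at hsum
  have h0 : HasDerivAt (fun x => marcumQ x (y x)) 0 a := by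
    apply (hasDerivAt_const a (1-ε)).congr_of_eventuallyEq
    filter_upwards [hlevel] with x hx
    exact hx
  have huniq := hsum.unique h0
  have hbE : (0:ℝ) < b * Real.exp (-(b^2 + a^2)/2) := by positivity
  have h5 : besselI1 (a*b) * (b * Real.exp (-(b^2 + a^2)/2))
      = (besselI0 (a*b) * y') * (b * Real.exp (-(b^2 + a^2)/2)) := by
    rw [hD_def] at huniq
    linear_combination huniq
  have h6 := mul_right_cancel₀ (ne_of_gt hbE) h5
  rw [eq_div_iff (ne_of_gt hI0pos)]
  linear_combination h6.symm
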